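/- arXiv:2603.16234 — 3 statements merged into one kernel-verified Lean document; each statement's English description precedes it below -/
import Mathlib

section
/- For every integer n ≥ 1, the conjugator length function of the surface group G satisfies CL(2n) ≥ n − 1. -/
namespace SG

/-- A letter of the alphabet `S± = {cᵢ^{±1}}`: `(i, true)` is `c_{i+1}`,
`(i, false)` is `c_{i+1}⁻¹`. -/
abbrev Letter (g : ℕ) := Fin (2*g) × Bool

/-- A word in the alphabet `S±`. -/
abbrev Word (g : ℕ) := List (Letter g)

/-- The surface relator `c₁c₂⋯c_{2g}c₁⁻¹c₂⁻¹⋯c_{2g}⁻¹` in the free group. -/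
def relator (g : ℕ) : FreeGroup (Fin (2*g)) :=
  (List.ofFn fun i : Fin (2*g) => FreeGroup.of i).prod *
  (List.ofFn fun i : Fin (2*g) => (FreeGroup.of i)⁻¹).prod

/-- The surface group with the symmetric presentation. -/
abbrev SurfaceGroup (g : ℕ) :=
  PresentedGroup ({relator g} : Set (FreeGroup (Fin (2*g))))

/-- The generator `c_{i+1}` of the surface group. -/
def gen (g : ℕ) (i : Fin (2*g)) : SurfaceGroup g := PresentedGroup.of i

/-- The inverse of a letter. -/
def invLetter (g : ℕ) (a : Letter g) : Letter g := (a.1, !a.2)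

/-- The group element represented by a letter. -/
def evalLetter (g : ℕ) (a : Letter g) : SurfaceGroup g :=
  if a.2 then gen g a.1 else (gen g a.1)⁻¹

/-- The group element represented by a word. -/
def eval (g : ℕ) (W : Word g) : SurfaceGroup g := (W.map (evalLetter g)).prod

/-- The formal inverse `x_n⁻¹ ⋯ x₁⁻¹` of a word `x₁ ⋯ x_n`. -/
def wordInv (g : ℕ) (W : Word g) : Word g := (W.map (invLetter g)).reverse

/-- Word length of a group element: the least `n` such that the element is a
product of `n` elements of `S ∪ S⁻¹`. -/
noncomputable def len (g : ℕ) (u : SurfaceGroup g) : ℕ :=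
  sInf {n | ∃ W : Word g, W.length = n ∧ eval g W = u}

/-- `conjLen g u v` is the minimum of `|x|` over conjugators `x` with `x⁻¹ux = v`. -/
noncomputable def conjLen (g : ℕ) (u v : SurfaceGroup g) : ℕ :=
  sInf {k | ∃ x : SurfaceGroup g, x⁻¹ * u * x = v ∧ len g x = k}

/-- The conjugator length function: `CL g n` is the least `N` such that any
conjugate `u, v` with `|u| + |v| ≤ n` admit a conjugator of length `≤ N`. -/
noncomputable def CL (g : ℕ) (n : ℕ) : ℕ :=
  sInf {N | ∀ u v : SurfaceGroup g,
    (∃ x : SurfaceGroup g, x⁻¹ * u * x = v) → len g u + len g v ≤ n →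
      conjLen g u v ≤ N}

/-- Rank of a letter in the ascending order
`c_{2g} ≺ ⋯ ≺ c₂ ≺ c₁ ≺ c₁⁻¹ ≺ c₂⁻¹ ≺ ⋯ ≺ c_{2g}⁻¹`. -/
def rank (g : ℕ) (a : Letter g) : ℕ :=
  if a.2 then (2*g - 1) - (a.1 : ℕ) else 2*g + (a.1 : ℕ)

/-- The strict order `≺` on letters. -/
def letterLt (g : ℕ) (a b : Letter g) : Prop := rank g a < rank g b

/-- The length-lexicographical order `≺` on words. -/
def wordLt (g : ℕ) (X Y : Word g) : Prop :=
  X.length < Y.length ∨ (X.length = Y.length ∧ List.Lex (letterLt g) X Y)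

/-- A word is irreducible if it is the `≺`-least word representing its element. -/
def IrreducibleWord (g : ℕ) (W : Word g) : Prop :=
  ∀ W' : Word g, eval g W' = eval g W → W' = W ∨ wordLt g W W'

/-- A word is cyclically irreducible if all its cyclic permutations are irreducible. -/
def CyclicallyIrreducibleWord (g : ℕ) (W : Word g) : Prop :=
  ∀ W' : Word g, List.IsRotated W W' → IrreducibleWord g W'

/-- A word is freely reduced if no letter is followed by its inverse. -/
def FreelyReduced (g : ℕ) (W : Word g) : Prop :=
  List.Chain' (fun a c => c ≠ invLetter g a) W

/-- The normal form of a group element: the `≺`-least word representing it. -/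
noncomputable def nf (g : ℕ) (x : SurfaceGroup g) : Word g := by
  classical
  exact if h : ∃ W : Word g, eval g W = x ∧ IrreducibleWord g W then h.choose else []

/-- The word `R = c₁c₂⋯c_{2g}c₁⁻¹c₂⁻¹⋯c_{2g}⁻¹`. -/
def Rword (g : ℕ) : Word g :=
  (List.ofFn fun i : Fin (2*g) => ((i, true) : Letter g)) ++
  (List.ofFn fun i : Fin (2*g) => ((i, false) : Letter g))

/-- `𝓡`: all cyclic permutations of `R` and of `R⁻¹`. -/
def RSet (g : ℕ) : Set (Word g) :=
  {W | List.IsRotated (Rword g) W ∨ List.IsRotated (wordInv g (Rword g)) W}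

/-- `seg g b i k` is the word `b_i b_{i+1} ⋯ b_{i+k-1}`. -/
def seg (g : ℕ) (b : ℕ → Letter g) (i k : ℕ) : Word g :=
  (List.range k).map fun j => b (i + j)

/-- `dseg g b i k` is the descending word `b_i b_{i-1} ⋯ b_{i-k+1}`
(indices taken modulo `4g`, using periodicity of `b`). -/
def dseg (g : ℕ) (b : ℕ → Letter g) (i k : ℕ) : Word g :=
  (List.range k).map fun j => b (i + 4*g - j)

/-- `b : ℕ → Letter g` is a `4g`-periodic (1-based) enumeration of the letters
`b₁, …, b_{4g}` of some word `b₁⋯b_{4g} ∈ 𝓡`. -/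
def RelSeq (g : ℕ) (b : ℕ → Letter g) : Prop :=
  (∀ i, b (i + 4*g) = b i) ∧ seg g b 1 (4*g) ∈ RSet g

/-- The `t`-th power `W^t` of a word. -/
def wpow (g : ℕ) (W : Word g) (t : ℕ) : Word g := (List.replicate t W).flatten

/-- A `k`-fractional relator: an initial segment of length `k` (with `2 ≤ k ≤ 4g`)
of some word in `𝓡`. -/
def IsFR (g : ℕ) (k : ℕ) (W : Word g) : Prop :=
  2 ≤ k ∧ k ≤ 4*g ∧ ∃ B ∈ RSet g, W = B.take k

/-- `IsLLFROcc g k W P F Q` : the factorization `W = P ++ F ++ Q` exhibits `F`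
as a `k`-locally longest fractional relator of `W`. -/
def IsLLFROcc (g : ℕ) (k : ℕ) (W P F Q : Word g) : Prop :=
  W = P ++ F ++ Q ∧ IsFR g k F ∧
  (∀ a, P.getLast? = some a → ¬ IsFR g (k+1) (a :: F)) ∧
  (∀ a, Q.head? = some a → ¬ IsFR g (k+1) (F ++ [a]))

/-- `W` contains a `k`-LLFR. -/
def HasLLFR (g : ℕ) (k : ℕ) (W : Word g) : Prop :=
  ∃ P F Q, IsLLFROcc g k W P F Q

/-- Length-lexicographical order on pairs of words. -/
def pairLt (g : ℕ) (p q : Word g × Word g) : Prop :=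
  wordLt g p.1 q.1 ∨ (p.1 = q.1 ∧ wordLt g p.2 q.2)

/-- A candidate for the reducing-subword pair of `(W₁, W₂)`. -/
def IsRSCand (g : ℕ) (W₁ W₂ C₁ C₂ : Word g) : Prop :=
  ∃ A B C' : Word g, W₁ = A ++ C₁ ∧ W₂ = C₂ ++ B ∧
    nf g (eval g (W₁ ++ W₂)) = A ++ C' ++ B

/-- `(C₁, C₂)` is the reducing-subword pair `rs(W₁, W₂)`: the `≺`-least candidate. -/
def IsRS (g : ℕ) (W₁ W₂ C₁ C₂ : Word g) : Prop :=
  IsRSCand g W₁ W₂ C₁ C₂ ∧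
  ∀ D₁ D₂ : Word g, IsRSCand g W₁ W₂ D₁ D₂ →
    (C₁ = D₁ ∧ C₂ = D₂) ∨ pairLt g (C₁, C₂) (D₁, D₂)

end SG

namespace SGLB

/-- The affine group `x ↦ 2^s x + t`. -/
structure Aff : Type where
  s : ℤ
  t : ℚ

namespace Aff

lemma ext' {x y : Aff} (h1 : x.s = y.s) (h2 : x.t = y.t) : x = y := by
  cases x; cases y; simp_all

instance : Group Aff where
  mul x y := ⟨x.s + y.s, x.t + (2:ℚ)^x.s * y.t⟩
  one := ⟨0, 0⟩
  inv x := ⟨-x.s, -((2:ℚ)^(-x.s) * x.t)⟩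
  mul_assoc a b c := ext'
    (show (a.s + b.s) + c.s = a.s + (b.s + c.s) by ring)
    (show (a.t + (2:ℚ)^a.s * b.t) + (2:ℚ)^(a.s + b.s) * c.t
        = a.t + (2:ℚ)^a.s * (b.t + (2:ℚ)^b.s * c.t) by
      rw [zpow_add₀ (show (2:ℚ) ≠ 0 by norm_num)]; ring)
  one_mul a := ext' (show (0:ℤ) + a.s = a.s by ring)
    (show (0:ℚ) + (2:ℚ)^(0:ℤ) * a.t = a.t by simp)
  mul_one a := ext' (show a.s + (0:ℤ) = a.s by ring)
    (show a.t + (2:ℚ)^a.s * 0 = a.t by ring)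
  inv_mul_cancel a := ext' (show -a.s + a.s = 0 by ring)
    (show -((2:ℚ)^(-a.s) * a.t) + (2:ℚ)^(-a.s) * a.t = 0 by ring)

@[simp] lemma mul_s (x y : Aff) : (x*y).s = x.s + y.s := rfl
@[simp] lemma mul_t (x y : Aff) : (x*y).t = x.t + (2:ℚ)^x.s * y.t := rfl
@[simp] lemma one_s : (1:Aff).s = 0 := rfl
@[simp] lemma one_t : (1:Aff).t = 0 := rfl
@[simp] lemma inv_s (x : Aff) : (x⁻¹).s = -x.s := rfl

/-- translation by 1 -/
def A : Aff := ⟨0, 1⟩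
/-- multiplication by 2 -/
def B : Aff := ⟨1, 0⟩

lemma pow_s (x : Aff) (k : ℕ) : (x^k).s = k * x.s := by
  induction k with
  | zero => simp
  | succ k ih => rw [pow_succ]; simp [ih]; ring

lemma s_eq_zero_of_commute {x : Aff} (h : x * A = A * x) : x.s = 0 := by
  have ht : x.t + (2:ℚ)^x.s * 1 = 1 + (2:ℚ)^(0:ℤ) * x.t := congrArg Aff.t h
  have h2 : (2:ℚ)^x.s = (2:ℚ)^(0:ℤ) := by
    rw [zpow_zero] at ht ⊢; linarith
  exact zpow_right_injective₀ (by norm_num) (by norm_num) h2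

end Aff

variable {H : Type*} [Group H]

/-- product of inverses of a palindrome is the inverse of the product -/
lemma palindrome_prod {k : ℕ} (F : Fin k → H) (hp : ∀ i, F i = F i.rev) :
    (List.ofFn fun i => (F i)⁻¹).prod = ((List.ofFn F).prod)⁻¹ := by
  rw [List.prod_inv_reverse]
  congr 1
  apply List.ext_getElem
  · simp
  · intro i h1 h2
    simp only [List.length_reverse, List.length_map, List.length_ofFn] at h1 h2 ⊢
    rw [List.getElem_reverse, List.getElem_map, List.getElem_ofFn, List.getElem_ofFn]
    congr 1
    rw [hp ⟨i, h2⟩]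
    congr 1
    ext
    simp [Fin.val_rev]
    omega

section Phi

variable (g : ℕ)

/-- the palindromic assignment of generators -/
def f : Fin (2*g) → Aff := fun i =>
  if (i:ℕ) = 0 ∨ (i:ℕ) = 2*g-1 then Aff.A
  else if (i:ℕ) = 1 ∨ (i:ℕ) = 2*g-2 then Aff.B else 1

lemma f_palindrome (i : Fin (2*g)) : f g i = f g i.rev := by
  have hi := i.isLt
  have hr : (i.rev : ℕ) = 2*g - (i + 1) := Fin.val_rev i
  unfold f
  have h1 : ((i:ℕ) = 0 ∨ (i:ℕ) = 2*g-1) ↔ ((i.rev:ℕ) = 0 ∨ (i.rev:ℕ) = 2*g-1) := by omega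
  have h2 : ((i:ℕ) = 1 ∨ (i:ℕ) = 2*g-2) ↔ ((i.rev:ℕ) = 1 ∨ (i.rev:ℕ) = 2*g-2) := by omega
  rw [if_congr h1 rfl (if_congr h2 rfl rfl)]

lemma lift_relator : ∀ r ∈ ({SG.relator g} : Set (FreeGroup (Fin (2*g)))),
    FreeGroup.lift (f g) r = 1 := by
  intro r hr
  rw [Set.mem_singleton_iff] at hr
  subst hr
  unfold SG.relator
  rw [map_mul, map_list_prod, map_list_prod, List.map_ofFn, List.map_ofFn]
  have e1 : ((FreeGroup.lift (f g)) ∘ fun i : Fin (2*g) => FreeGroup.of i) = f g := by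
    funext i; simp [Function.comp]
  have e2 : ((FreeGroup.lift (f g)) ∘ fun i : Fin (2*g) => (FreeGroup.of i)⁻¹)
      = fun i => (f g i)⁻¹ := by
    funext i; simp [Function.comp]
  rw [e1, e2, palindrome_prod (f g) (f_palindrome g)]
  exact mul_inv_cancel _

/-- The homomorphism from the surface group to the affine group. -/
noncomputable def phi : SG.SurfaceGroup g →* Aff :=
  PresentedGroup.toGroup (lift_relator g)

lemma phi_gen (i : Fin (2*g)) : phi g (SG.gen g i) = f g i :=
  PresentedGroup.toGroup.of (lift_relator g)

lemma phi_letter_s (a : SG.Letter g) : |(phi g (SG.evalLetter g a)).s| ≤ 1 := by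
  unfold SG.evalLetter
  have h : |(phi g (SG.gen g a.1)).s| ≤ 1 := by
    rw [phi_gen]
    unfold f
    split_ifs <;> simp [Aff.A, Aff.B]
  split_ifs
  · exact h
  · rw [map_inv, Aff.inv_s, abs_neg]; exact h

lemma phi_eval_s (W : SG.Word g) : |(phi g (SG.eval g W)).s| ≤ W.length := by
  induction W with
  | nil => simp [SG.eval]
  | cons a W ih =>
    have : SG.eval g (a :: W) = SG.evalLetter g a * SG.eval g W := by
      simp [SG.eval]
    rw [this, map_mul, Aff.mul_s, List.length_cons]
    calc |(phi g (SG.evalLetter g a)).s + (phi g (SG.eval g W)).s|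
        ≤ |(phi g (SG.evalLetter g a)).s| + |(phi g (SG.eval g W)).s| := abs_add_le _ _
      _ ≤ 1 + W.length := by
          have h1 := phi_letter_s g a
          have h2 := ih
          omega
      _ = (W.length + 1 : ℕ) := by push_cast; ring

end Phi

section Eval

variable (g : ℕ)

lemma eval_surjective (u : SG.SurfaceGroup g) : ∃ W : SG.Word g, SG.eval g W = u := by
  induction u using QuotientGroup.induction_on with
  | H x =>
    induction x using FreeGroup.induction_on with
    | C1 => exact ⟨[], rfl⟩
    | of i =>
      refine ⟨[(i, true)], ?_⟩
      show SG.evalLetter g (i, true) * 1 = _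
      rw [mul_one]
      rfl
    | inv_of i ih =>
      refine ⟨[(i, false)], ?_⟩
      show SG.evalLetter g (i, false) * 1 = _
      rw [mul_one]
      show (SG.gen g i)⁻¹ = _
      rfl
    | mul x y ihx ihy =>
      obtain ⟨Wx, hWx⟩ := ihx
      obtain ⟨Wy, hWy⟩ := ihy
      refine ⟨Wx ++ Wy, ?_⟩
      simp [SG.eval, ← hWx, ← hWy]
      rfl

lemma len_spec (u : SG.SurfaceGroup g) :
    ∃ W : SG.Word g, W.length = SG.len g u ∧ SG.eval g W = u := by
  have hne : {n | ∃ W : SG.Word g, W.length = n ∧ SG.eval g W = u}.Nonempty := by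
    obtain ⟨W, hW⟩ := eval_surjective g u
    exact ⟨W.length, W, rfl, hW⟩
  exact Nat.sInf_mem hne

lemma len_le (u : SG.SurfaceGroup g) (W : SG.Word g) (hW : SG.eval g W = u) :
    SG.len g u ≤ W.length :=
  Nat.sInf_le ⟨W, rfl, hW⟩

lemma abs_phi_s_le_len (u : SG.SurfaceGroup g) : |(phi g u).s| ≤ SG.len g u := by
  obtain ⟨W, hlen, heval⟩ := len_spec g u
  have h := phi_eval_s g W
  rw [heval, hlen] at h
  exact h

end Eval

end SGLB


namespace SGLB

section Main

variable (g : ℕ)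

lemma conjLen_spec (u v : SG.SurfaceGroup g) (hconj : ∃ x, x⁻¹ * u * x = v) :
    ∃ x : SG.SurfaceGroup g, x⁻¹ * u * x = v ∧ SG.len g x = SG.conjLen g u v := by
  obtain ⟨x, hx⟩ := hconj
  have hne : {k | ∃ x : SG.SurfaceGroup g, x⁻¹ * u * x = v ∧ SG.len g x = k}.Nonempty :=
    ⟨SG.len g x, x, hx, rfl⟩
  obtain ⟨x, hx, hlen⟩ := Nat.sInf_mem hne
  exact ⟨x, hx, hlen⟩

lemma CL_set_nonempty (n : ℕ) :
    {N | ∀ u v : SG.SurfaceGroup g,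
      (∃ x : SG.SurfaceGroup g, x⁻¹ * u * x = v) → SG.len g u + SG.len g v ≤ n →
        SG.conjLen g u v ≤ N}.Nonempty := by
  classical
  have hBfin : {u : SG.SurfaceGroup g | SG.len g u ≤ n}.Finite := by
    have hsub : {u : SG.SurfaceGroup g | SG.len g u ≤ n}
        ⊆ SG.eval g '' {W : SG.Word g | W.length ≤ n} := by
      intro u hu
      obtain ⟨W, hlen, heval⟩ := len_spec g u
      exact ⟨W, by rw [Set.mem_setOf_eq, hlen]; exact hu, heval⟩
    exact ((List.finite_length_le (SG.Letter g) n).image _).subset hsub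
  have hfin : ((fun p : SG.SurfaceGroup g × SG.SurfaceGroup g => SG.conjLen g p.1 p.2) ''
      ({u | SG.len g u ≤ n} ×ˢ {u | SG.len g u ≤ n})).Finite := (hBfin.prod hBfin).image _
  obtain ⟨N, hN⟩ := hfin.bddAbove
  refine ⟨N, fun u v hconj hsum => ?_⟩
  exact hN ⟨(u, v), ⟨by simp only [Set.mem_setOf_eq]; omega,
    by simp only [Set.mem_setOf_eq]; omega⟩, rfl⟩

/-- the heart of the matter -/
lemma main_bound (hg : 2 ≤ g) (m : ℕ) (i0 : Fin (2*g)) (i1 : Fin (2*g))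
    (h0 : (i0 : ℕ) = 0) (h1 : (i1 : ℕ) = 1) :
    m ≤ SG.conjLen g (SG.gen g i0) ((SG.gen g i1 ^ m)⁻¹ * SG.gen g i0 * SG.gen g i1 ^ m) := by
  classical
  have h2g : 4 ≤ 2*g := by omega
  -- phi images
  have hphic1 : SGLB.phi g (SG.gen g i0) = SGLB.Aff.A := by
    rw [SGLB.phi_gen]
    unfold SGLB.f
    have hp : ((i0:ℕ) = 0 ∨ (i0:ℕ) = 2*g-1) := Or.inl h0
    rw [if_pos hp]
  have hphic2 : SGLB.phi g (SG.gen g i1) = SGLB.Aff.B := by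
    rw [SGLB.phi_gen]
    unfold SGLB.f
    have hn : ¬((i1:ℕ) = 0 ∨ (i1:ℕ) = 2*g-1) := by omega
    have hp : ((i1:ℕ) = 1 ∨ (i1:ℕ) = 2*g-2) := Or.inl h1
    rw [if_neg hn, if_pos hp]
  have hconj : ∃ x : SG.SurfaceGroup g, x⁻¹ * SG.gen g i0 * x
      = (SG.gen g i1 ^ m)⁻¹ * SG.gen g i0 * SG.gen g i1 ^ m := ⟨SG.gen g i1 ^ m, rfl⟩
  obtain ⟨x, hx, hlen⟩ := conjLen_spec g _ _ hconj
  rw [← hlen]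
  -- y = x * (c2^m)⁻¹ commutes with c1
  have hcomm : SG.gen g i0 * (x * (SG.gen g i1 ^ m)⁻¹)
      = (x * (SG.gen g i1 ^ m)⁻¹) * SG.gen g i0 := by
    calc SG.gen g i0 * (x * (SG.gen g i1 ^ m)⁻¹)
        = x * (x⁻¹ * SG.gen g i0 * x) * (SG.gen g i1 ^ m)⁻¹ := by group
      _ = x * ((SG.gen g i1 ^ m)⁻¹ * SG.gen g i0 * SG.gen g i1 ^ m) * (SG.gen g i1 ^ m)⁻¹ := by
          rw [hx]
      _ = (x * (SG.gen g i1 ^ m)⁻¹) * SG.gen g i0 := by group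
  have h3 : (SGLB.phi g (x * (SG.gen g i1 ^ m)⁻¹)).s = 0 := by
    apply SGLB.Aff.s_eq_zero_of_commute
    have h : SGLB.phi g (SG.gen g i0) * SGLB.phi g (x * (SG.gen g i1 ^ m)⁻¹)
        = SGLB.phi g (x * (SG.gen g i1 ^ m)⁻¹) * SGLB.phi g (SG.gen g i0) := by
      rw [← map_mul, ← map_mul, hcomm]
    rw [hphic1] at h
    exact h.symm
  have h4 : (SGLB.phi g x).s = m := by
    have hxdecomp : x = (x * (SG.gen g i1 ^ m)⁻¹) * SG.gen g i1 ^ m := by group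
    calc (SGLB.phi g x).s
        = (SGLB.phi g ((x * (SG.gen g i1 ^ m)⁻¹) * SG.gen g i1 ^ m)).s := by rw [← hxdecomp]
      _ = (SGLB.phi g (x * (SG.gen g i1 ^ m)⁻¹)).s + (SGLB.phi g (SG.gen g i1 ^ m)).s := by
          rw [map_mul, SGLB.Aff.mul_s]
      _ = (SGLB.phi g (SG.gen g i1 ^ m)).s := by rw [h3]; ring
      _ = (m : ℤ) := by
          rw [map_pow, hphic2, SGLB.Aff.pow_s]
          show (m : ℤ) * (1 : ℤ) = m
          ring
  have h5 := SGLB.abs_phi_s_le_len g x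
  rw [h4] at h5
  have h6 : (m:ℤ) ≤ (SG.len g x : ℤ) := by
    rwa [abs_of_nonneg (by positivity)] at h5
  exact_mod_cast h6

end Main

end SGLB

/-- For every `n ≥ 1`, `CL(2n) ≥ n − 1` in the surface group. -/
theorem surface_group_CL_lower_bound (g : ℕ) (hg : 2 ≤ g) (n : ℕ) (hn : 1 ≤ n) :
    n - 1 ≤ SG.CL g (2*n) := by
  classical
  obtain ⟨m, rfl⟩ : ∃ m, n = m + 1 := ⟨n - 1, by omega⟩
  have h2g : 4 ≤ 2*g := by omega
  have hi0 : (0:ℕ) < 2*g := by omega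
  have hi1 : (1:ℕ) < 2*g := by omega
  -- the pair
  have hconj : ∃ x : SG.SurfaceGroup g, x⁻¹ * SG.gen g ⟨0, hi0⟩ * x
      = (SG.gen g ⟨1, hi1⟩ ^ m)⁻¹ * SG.gen g ⟨0, hi0⟩ * SG.gen g ⟨1, hi1⟩ ^ m :=
    ⟨SG.gen g ⟨1, hi1⟩ ^ m, rfl⟩
  -- length bounds
  have hlenu : SG.len g (SG.gen g ⟨0, hi0⟩) ≤ 1 := by
    have h := SGLB.len_le g (SG.gen g ⟨0, hi0⟩) [(⟨0, hi0⟩, true)] ?_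
    · simpa using h
    · show SG.evalLetter g (⟨0, hi0⟩, true) * 1 = _
      rw [mul_one]
      rfl
  have hlenv : SG.len g ((SG.gen g ⟨1, hi1⟩ ^ m)⁻¹ * SG.gen g ⟨0, hi0⟩ * SG.gen g ⟨1, hi1⟩ ^ m)
      ≤ 2*m + 1 := by
    have heval : SG.eval g
        (List.replicate m ((⟨1, hi1⟩, false) : SG.Letter g) ++ [((⟨0, hi0⟩, true) : SG.Letter g)]
          ++ List.replicate m ((⟨1, hi1⟩, true) : SG.Letter g))
        = (SG.gen g ⟨1, hi1⟩ ^ m)⁻¹ * SG.gen g ⟨0, hi0⟩ * SG.gen g ⟨1, hi1⟩ ^ m := by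
      unfold SG.eval
      rw [List.map_append, List.map_append, List.prod_append, List.prod_append,
        List.map_replicate, List.map_replicate, List.prod_replicate, List.prod_replicate]
      have e1 : SG.evalLetter g ((⟨1, hi1⟩, false) : SG.Letter g) = (SG.gen g ⟨1, hi1⟩)⁻¹ := rfl
      have e2 : SG.evalLetter g ((⟨1, hi1⟩, true) : SG.Letter g) = SG.gen g ⟨1, hi1⟩ := rfl
      have e3 : (List.map (SG.evalLetter g) [((⟨0, hi0⟩, true) : SG.Letter g)]).prod
          = SG.gen g ⟨0, hi0⟩ := by
        show SG.evalLetter g (⟨0, hi0⟩, true) * 1 = _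
        rw [mul_one]
        rfl
      rw [e1, e2, e3, inv_pow]
    have h := SGLB.len_le g _ _ heval
    have hL : (List.replicate m ((⟨1, hi1⟩, false) : SG.Letter g)
        ++ [((⟨0, hi0⟩, true) : SG.Letter g)]
        ++ List.replicate m ((⟨1, hi1⟩, true) : SG.Letter g)).length = 2*m + 1 := by
      simp only [List.length_append, List.length_replicate, List.length_cons,
        List.length_nil]
      omega
    rw [hL] at h
    exact h
  -- main bound
  have hmain := SGLB.main_bound g hg m ⟨0, hi0⟩ ⟨1, hi1⟩ rfl rfl
  -- CL membership
  obtain hSne := SGLB.CL_set_nonempty g (2*(m+1))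
  have hmem := Nat.sInf_mem hSne
  have hle := hmem (SG.gen g ⟨0, hi0⟩)
    ((SG.gen g ⟨1, hi1⟩ ^ m)⁻¹ * SG.gen g ⟨0, hi0⟩ * SG.gen g ⟨1, hi1⟩ ^ m) hconj (by omega)
  have : (m + 1) - 1 = m := by omega
  rw [this]
  calc m ≤ SG.conjLen g (SG.gen g ⟨0, hi0⟩)
        ((SG.gen g ⟨1, hi1⟩ ^ m)⁻¹ * SG.gen g ⟨0, hi0⟩ * SG.gen g ⟨1, hi1⟩ ^ m) := hmain
    _ ≤ SG.CL g (2*(m+1)) := hle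
end

section
/- For every integer n ≥ 1, in the surface group G the elements u = c₁ and v = c₂^{1−n} c₁ c₂^{n−1} are conjugate, the word length of v equals 2n − 1, and CL(u,v) = n − 1; that is, the minimum of |x| over all x ∈ G with x⁻¹ c₁ x = c₂^{1−n} c₁ c₂^{n−1} equals n − 1. -/
namespace SGP

/-- The group `ℚ ⋊ ℤ`: `(m,k)·(m',k') = (m + 2^k m', k+k')`. -/
structure H where
  m : ℚ
  k : ℤ

namespace H

instance : Mul H := ⟨fun a b => ⟨a.m + 2 ^ a.k * b.m, a.k + b.k⟩⟩
instance : One H := ⟨⟨0, 0⟩⟩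
instance : Inv H := ⟨fun a => ⟨-(2 ^ (-a.k) * a.m), -a.k⟩⟩

@[simp] theorem mul_m (a b : H) : (a * b).m = a.m + 2 ^ a.k * b.m := rfl
@[simp] theorem mul_k (a b : H) : (a * b).k = a.k + b.k := rfl
@[simp] theorem one_m : (1 : H).m = 0 := rfl
@[simp] theorem one_k : (1 : H).k = 0 := rfl
@[simp] theorem inv_m (a : H) : (a⁻¹).m = -(2 ^ (-a.k) * a.m) := rfl
@[simp] theorem inv_k (a : H) : (a⁻¹).k = -a.k := rfl
@[simp] theorem mk_m (q : ℚ) (j : ℤ) : (H.mk q j).m = q := rfl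
@[simp] theorem mk_k (q : ℚ) (j : ℤ) : (H.mk q j).k = j := rfl

theorem ext' {a b : H} (h1 : a.m = b.m) (h2 : a.k = b.k) : a = b := by
  cases a; cases b; simp_all

instance : Group H where
  mul_assoc a b c := ext' (by simp [zpow_add₀ (two_ne_zero (α := ℚ))]; ring) (by simp [add_assoc])
  one_mul a := ext' (by simp) (by simp)
  mul_one a := ext' (by simp) (by simp)
  inv_mul_cancel a := ext' (by simp [zpow_neg]) (by simp)

def α : H := ⟨1, 0⟩
def β : H := ⟨0, 1⟩
@[simp] theorem α_m : α.m = 1 := rfl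
@[simp] theorem α_k : α.k = 0 := rfl
@[simp] theorem β_m : β.m = 0 := rfl
@[simp] theorem β_k : β.k = 1 := rfl

@[simp] theorem β_zpow (j : ℤ) : β ^ j = (⟨0, j⟩ : H) := by
  have hp : ∀ t : ℕ, β ^ t = (⟨0, (t : ℤ)⟩ : H) := by
    intro t
    induction t with
    | zero => rfl
    | succ s ih => rw [pow_succ, ih]; exact ext' (by simp) (by simp)
  rcases j with t | t
  · simpa using hp t
  · have h : (Int.negSucc t) = -((t + 1 : ℕ) : ℤ) := by simp [Int.negSucc_eq]
    rw [h, zpow_neg, zpow_natCast, hp]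
    exact ext' (by simp) (by simp)

theorem conj_α (x : H) : x⁻¹ * α * x = (⟨2 ^ (-x.k), 0⟩ : H) := by
  refine ext' ?_ (by simp)
  simp [zpow_neg]

/-- The generating set `{α, α⁻¹, β, β⁻¹, 1}`. -/
def Gen (x : H) : Prop := x = α ∨ x = α⁻¹ ∨ x = β ∨ x = β⁻¹ ∨ x = 1

theorem Gen.inv {x : H} (h : Gen x) : Gen x⁻¹ := by
  rcases h with rfl | rfl | rfl | rfl | rfl
  · exact Or.inr (Or.inl rfl)
  · exact Or.inl (by simp)
  · exact Or.inr (Or.inr (Or.inr (Or.inl rfl)))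
  · exact Or.inr (Or.inr (Or.inl (by simp)))
  · exact Or.inr (Or.inr (Or.inr (Or.inr (by simp))))

/-- The length lower-bound invariant. -/
noncomputable def D (h : H) : ℤ :=
  if h.m = 0 then max h.k (-h.k)
  else h.k + 2 * max (max (-padicValRat 2 h.m) (-h.k)) 0 + 1

theorem val2pow (j : ℤ) : padicValRat 2 ((2 : ℚ) ^ j) = j := by
  have h2 : padicValRat 2 (2 : ℚ) = 1 := by
    have := padicValRat.self (p := 2) (by norm_num)
    simpa using this
  have hp : ∀ t : ℕ, padicValRat 2 ((2 : ℚ) ^ (t : ℤ)) = t := by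
    intro t
    rw [zpow_natCast, padicValRat.pow (2 : ℚ), h2, mul_one]
  rcases j with t | t
  · exact hp t
  · have h : (Int.negSucc t) = -((t + 1 : ℕ) : ℤ) := by simp [Int.negSucc_eq]
    rw [h, zpow_neg, padicValRat.inv, hp]

theorem D_one : D 1 = 0 := by simp [D]

theorem D_step (a h : H) (ha : Gen a) : D (a * h) ≤ D h + 1 := by
  obtain ⟨m, k⟩ := h
  have hval2 : padicValRat 2 (2 : ℚ) = 1 := by
    have := padicValRat.self (p := 2) (by norm_num)
    simpa using this
  rcases ha with rfl | rfl | rfl | rfl | rfl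
  · -- α
    have e : α * H.mk m k = H.mk (1 + m) k := ext' (by simp) (by simp)
    rw [e]
    unfold D
    simp only [mk_m, mk_k]
    by_cases hm : m = 0
    · subst hm
      have hv : padicValRat 2 (1 + (0:ℚ)) = 0 := by norm_num
      rw [if_neg (by norm_num), if_pos rfl, hv]
      omega
    · by_cases hm1 : 1 + m = 0
      · have hm' : m = -1 := by linarith
        have hv : padicValRat 2 m = 0 := by
          rw [hm']
          rw [show (-1 : ℚ) = -(1:ℚ) by norm_num, padicValRat.neg, padicValRat.one]
        rw [if_pos hm1, if_neg hm, hv]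
        omega
      · have hmin : min (padicValRat 2 (1:ℚ)) (padicValRat 2 m) ≤ padicValRat 2 (1 + m) :=
          padicValRat.min_le_padicValRat_add hm1
        rw [padicValRat.one] at hmin
        rw [if_neg hm1, if_neg hm]
        omega
  · -- α⁻¹
    have e : α⁻¹ * H.mk m k = H.mk (-1 + m) k := ext' (by simp) (by simp)
    rw [e]
    unfold D
    simp only [mk_m, mk_k]
    have hvneg1 : padicValRat 2 (-1 : ℚ) = 0 := by
      rw [show (-1 : ℚ) = -(1:ℚ) by norm_num, padicValRat.neg, padicValRat.one]
    by_cases hm : m = 0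
    · subst hm
      have hv : padicValRat 2 (-1 + (0:ℚ)) = 0 := by
        rw [add_zero]; exact hvneg1
      rw [if_neg (by norm_num), if_pos rfl, hv]
      omega
    · by_cases hm1 : -1 + m = 0
      · have hm' : m = 1 := by linarith
        have hv : padicValRat 2 m = 0 := by rw [hm', padicValRat.one]
        rw [if_pos hm1, if_neg hm, hv]
        omega
      · have hmin : min (padicValRat 2 (-1:ℚ)) (padicValRat 2 m) ≤ padicValRat 2 (-1 + m) :=
          padicValRat.min_le_padicValRat_add hm1
        rw [hvneg1] at hmin
        rw [if_neg hm1, if_neg hm]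
        omega
  · -- β
    have e : β * H.mk m k = H.mk (2 * m) (1 + k) := ext' (by simp) (by simp)
    rw [e]
    unfold D
    simp only [mk_m, mk_k]
    by_cases hm : m = 0
    · subst hm
      rw [if_pos (by norm_num), if_pos rfl]
      omega
    · have hv : padicValRat 2 (2 * m) = 1 + padicValRat 2 m := by
        rw [padicValRat.mul two_ne_zero hm, hval2]
      rw [if_neg (by simpa using hm), if_neg hm, hv]
      omega
  · -- β⁻¹
    have e : β⁻¹ * H.mk m k = H.mk (2⁻¹ * m) (-1 + k) := by
      refine ext' ?_ (by simp)
      simp [zpow_neg]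
    rw [e]
    unfold D
    simp only [mk_m, mk_k]
    by_cases hm : m = 0
    · subst hm
      rw [if_pos (by norm_num), if_pos rfl]
      omega
    · have hv : padicValRat 2 (2⁻¹ * m) = -1 + padicValRat 2 m := by
        rw [padicValRat.mul (inv_ne_zero two_ne_zero) hm, padicValRat.inv, hval2]
      rw [if_neg (by simpa using hm), if_neg hm, hv]
      omega
  · -- 1
    rw [one_mul]
    omega

theorem k_step (a h : H) (ha : Gen a) :
    max (a * h).k (-(a * h).k) ≤ max h.k (-h.k) + 1 := by
  have : (a * h).k = a.k + h.k := rfl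
  rcases ha with rfl | rfl | rfl | rfl | rfl <;> simp [this] <;> omega

end H

open H

/-- Images of the surface group generators. -/
noncomputable def hh : ℕ → H := fun j =>
  if j = 0 then α else if j = 1 then β else if j = 2 then β⁻¹ else if j = 3 then α⁻¹ else 1

theorem hh_one (j : ℕ) (hj : 4 ≤ j) : hh j = 1 := by
  unfold hh
  rw [if_neg (by omega), if_neg (by omega), if_neg (by omega), if_neg (by omega)]

theorem gen_hh (j : ℕ) : Gen (hh j) := by
  unfold hh Gen
  split_ifs <;> tauto

theorem prod_ofFn_eq {M : Type*} [Monoid M] (f : ℕ → M) (hone : ∀ j, 4 ≤ j → f j = 1) :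
    ∀ N, 4 ≤ N →
      (List.ofFn fun i : Fin N => f i).prod = f 0 * f 1 * f 2 * f 3 := by
  intro N
  induction N with
  | zero => omega
  | succ t ih =>
    intro h4
    rcases Nat.lt_or_ge t 4 with h | h
    · have ht : t = 3 := by omega
      subst ht
      simp [List.ofFn_succ, mul_assoc]
    · rw [List.ofFn_succ', List.concat_eq_append, List.prod_append]
      have e : (List.ofFn fun i : Fin t => f ((Fin.castSucc i) : ℕ)) =
          (List.ofFn fun i : Fin t => f i) := by
        congr 1
      rw [e, ih (by omega)]
      have ht : f ((Fin.last t : Fin (t+1)) : ℕ) = 1 := hone t h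
      simp only [ht, List.prod_cons, List.prod_nil, mul_one]

end SGP

namespace SGP
open H

theorem lift_relator (g : ℕ) (hg : 2 ≤ g) :
    ∀ r ∈ ({SG.relator g} : Set (FreeGroup (Fin (2*g)))),
      FreeGroup.lift (fun i : Fin (2*g) => hh (i : ℕ)) r = 1 := by
  intro r hr
  rw [Set.mem_singleton_iff] at hr
  subst hr
  unfold SG.relator
  rw [map_mul, map_list_prod, map_list_prod, List.map_ofFn, List.map_ofFn]
  have e1 : ((FreeGroup.lift fun i : Fin (2*g) => hh (i : ℕ)) ∘ fun i : Fin (2*g) => FreeGroup.of i)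
      = fun i : Fin (2*g) => hh (i : ℕ) := by
    funext i; simp
  have e2 : ((FreeGroup.lift fun i : Fin (2*g) => hh (i : ℕ)) ∘ fun i : Fin (2*g) => (FreeGroup.of i)⁻¹)
      = fun i : Fin (2*g) => (hh (i : ℕ))⁻¹ := by
    funext i; simp
  rw [e1, e2]
  rw [prod_ofFn_eq hh hh_one (2*g) (by omega),
      prod_ofFn_eq (fun j => (hh j)⁻¹) (fun j hj => by show (hh j)⁻¹ = 1; rw [hh_one j hj, inv_one]) (2*g) (by omega)]
  have h0 : hh 0 = α := by simp [hh]
  have h1 : hh 1 = β := by simp [hh]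
  have h2 : hh 2 = β⁻¹ := by simp [hh]
  have h3 : hh 3 = α⁻¹ := by simp [hh]
  rw [h0, h1, h2, h3]
  group

/-- The homomorphism from the surface group to `H`. -/
noncomputable def χ (g : ℕ) (hg : 2 ≤ g) : SG.SurfaceGroup g →* H :=
  PresentedGroup.toGroup (lift_relator g hg)

theorem χ_gen (g : ℕ) (hg : 2 ≤ g) (i : Fin (2*g)) : χ g hg (SG.gen g i) = hh (i : ℕ) :=
  PresentedGroup.toGroup.of (lift_relator g hg)

theorem eval_nil (g : ℕ) : SG.eval g [] = 1 := rfl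

theorem eval_cons (g : ℕ) (a : SG.Letter g) (W : SG.Word g) :
    SG.eval g (a :: W) = SG.evalLetter g a * SG.eval g W := by
  simp [SG.eval]

theorem eval_append (g : ℕ) (W₁ W₂ : SG.Word g) :
    SG.eval g (W₁ ++ W₂) = SG.eval g W₁ * SG.eval g W₂ := by
  simp [SG.eval]

theorem eval_replicate (g : ℕ) (t : ℕ) (a : SG.Letter g) :
    SG.eval g (List.replicate t a) = (SG.evalLetter g a) ^ t := by
  simp [SG.eval, List.map_replicate, List.prod_replicate]

theorem gen_letter (g : ℕ) (hg : 2 ≤ g) (a : SG.Letter g) :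
    Gen (χ g hg (SG.evalLetter g a)) := by
  unfold SG.evalLetter
  split_ifs
  · rw [χ_gen]; exact gen_hh _
  · rw [map_inv, χ_gen]; exact (gen_hh _).inv

theorem D_bound (g : ℕ) (hg : 2 ≤ g) : ∀ W : SG.Word g,
    D (χ g hg (SG.eval g W)) ≤ (W.length : ℤ) := by
  intro W
  induction W with
  | nil => rw [eval_nil, map_one, D_one]; simp
  | cons a W ih =>
    rw [eval_cons, map_mul]
    have := D_step (χ g hg (SG.evalLetter g a)) (χ g hg (SG.eval g W)) (gen_letter g hg a)
    simp only [List.length_cons]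
    push_cast
    omega

theorem k_bound (g : ℕ) (hg : 2 ≤ g) : ∀ W : SG.Word g,
    max (χ g hg (SG.eval g W)).k (-(χ g hg (SG.eval g W)).k) ≤ (W.length : ℤ) := by
  intro W
  induction W with
  | nil => rw [eval_nil, map_one]; simp
  | cons a W ih =>
    rw [eval_cons, map_mul]
    have := k_step (χ g hg (SG.evalLetter g a)) (χ g hg (SG.eval g W)) (gen_letter g hg a)
    simp only [List.length_cons]
    push_cast
    omega

theorem exists_word (g : ℕ) (u : SG.SurfaceGroup g) : ∃ W : SG.Word g, SG.eval g W = u := by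
  refine PresentedGroup.induction_on (C := fun u => ∃ W : SG.Word g, SG.eval g W = u) u ?_
  intro z
  refine FreeGroup.induction_on z ?_ ?_ ?_ ?_
  · exact ⟨[], by rw [eval_nil, map_one]⟩
  · intro x
    refine ⟨[(x, true)], ?_⟩
    rw [eval_cons, eval_nil, mul_one]
    simp [SG.evalLetter]
    rfl
  · intro x hx
    refine ⟨[(x, false)], ?_⟩
    rw [eval_cons, eval_nil, mul_one, map_inv]
    simp [SG.evalLetter]
    rfl
  · rintro x y ⟨W₁, h₁⟩ ⟨W₂, h₂⟩
    exact ⟨W₁ ++ W₂, by rw [eval_append, h₁, h₂, map_mul]⟩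

theorem len_le (g : ℕ) {u : SG.SurfaceGroup g} (W : SG.Word g) (h : SG.eval g W = u) :
    SG.len g u ≤ W.length :=
  Nat.sInf_le ⟨W, rfl, h⟩

theorem le_len (g : ℕ) {u : SG.SurfaceGroup g} (b : ℕ)
    (h : ∀ W : SG.Word g, SG.eval g W = u → b ≤ W.length) : b ≤ SG.len g u := by
  obtain ⟨W0, hW0⟩ := exists_word g u
  have hne : {n | ∃ W : SG.Word g, W.length = n ∧ SG.eval g W = u}.Nonempty :=
    ⟨W0.length, W0, rfl, hW0⟩
  obtain ⟨W, hlen, he⟩ := Nat.sInf_mem hne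
  unfold SG.len
  exact hlen ▸ h W he

end SGP

namespace SGP
open H

theorem main_aux (g : ℕ) (hg : 2 ≤ g) (n : ℕ) (hn : 1 ≤ n) (i0 i1 : Fin (2*g))
    (h0 : (i0 : ℕ) = 0) (h1 : (i1 : ℕ) = 1) :
    (∃ x : SG.SurfaceGroup g,
        x⁻¹ * SG.gen g i0 * x =
          (SG.gen g i1) ^ ((1 : ℤ) - (n : ℤ)) * SG.gen g i0 * (SG.gen g i1) ^ ((n : ℤ) - 1)) ∧
    SG.len g ((SG.gen g i1) ^ ((1 : ℤ) - (n : ℤ)) * SG.gen g i0 *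
        (SG.gen g i1) ^ ((n : ℤ) - 1)) = 2*n - 1 ∧
    SG.conjLen g (SG.gen g i0)
      ((SG.gen g i1) ^ ((1 : ℤ) - (n : ℤ)) * SG.gen g i0 *
        (SG.gen g i1) ^ ((n : ℤ) - 1)) = n - 1 := by
  have hn' : (1 : ℤ) ≤ (n : ℤ) := by exact_mod_cast hn
  set v : SG.SurfaceGroup g :=
    (SG.gen g i1) ^ ((1 : ℤ) - (n : ℤ)) * SG.gen g i0 * (SG.gen g i1) ^ ((n : ℤ) - 1) with hv
  have hχu : χ g hg (SG.gen g i0) = α := by rw [χ_gen, h0]; simp [hh]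
  have hχ1 : χ g hg (SG.gen g i1) = β := by rw [χ_gen, h1]; simp [hh]
  have hzp : ∀ y : SG.SurfaceGroup g, y ^ ((n:ℤ) - 1) = y ^ (n - 1 : ℕ) := by
    intro y
    rw [show ((n:ℤ) - 1) = ((n - 1 : ℕ) : ℤ) by omega, zpow_natCast]
  have hx0conj : ((SG.gen g i1) ^ ((n : ℤ) - 1))⁻¹ * SG.gen g i0 * (SG.gen g i1) ^ ((n : ℤ) - 1)
      = v := by
    rw [hv, ← zpow_neg, neg_sub]
  have hχv : χ g hg v = (⟨2 ^ ((1:ℤ) - (n:ℤ)), 0⟩ : H) := by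
    rw [hv, map_mul, map_mul, map_zpow, map_zpow, hχu, hχ1,
        show ((1:ℤ) - (n:ℤ)) = -((n:ℤ) - 1) by ring, zpow_neg, conj_α, β_zpow, mk_k]
  have hDv : D (⟨2 ^ ((1:ℤ) - (n:ℤ)), 0⟩ : H) = 2 * (n:ℤ) - 1 := by
    unfold D
    rw [mk_m, mk_k]
    rw [if_neg (zpow_ne_zero _ two_ne_zero), val2pow]
    omega
  -- length of v
  have hlen_v : SG.len g v = 2*n - 1 := by
    apply le_antisymm
    · have hel1 : SG.evalLetter g ((i1, false) : SG.Letter g) = (SG.gen g i1)⁻¹ := by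
        simp [SG.evalLetter]
      have hel2 : SG.evalLetter g ((i1, true) : SG.Letter g) = SG.gen g i1 := by
        simp [SG.evalLetter]
      have hel3 : SG.evalLetter g ((i0, true) : SG.Letter g) = SG.gen g i0 := by
        simp [SG.evalLetter]
      have he : SG.eval g (List.replicate (n-1) ((i1, false) : SG.Letter g) ++
          ([((i0, true) : SG.Letter g)] ++ List.replicate (n-1) ((i1, true) : SG.Letter g))) = v := by
        rw [eval_append, eval_append, eval_replicate, eval_replicate, eval_cons, eval_nil,
            mul_one, hel1, hel2, hel3, hv]
        rw [show ((1:ℤ) - (n:ℤ)) = -((n:ℤ) - 1) by ring, zpow_neg, hzp, inv_pow,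
            mul_assoc]
      have hle := len_le g _ he
      simp only [List.length_append, List.length_replicate, List.length_cons,
        List.length_nil] at hle
      omega
    · apply le_len
      intro W hW
      have hD := D_bound g hg W
      rw [hW, hχv, hDv] at hD
      omega
  -- lower bound on conjugator length
  have hklemma : ∀ x : SG.SurfaceGroup g, x⁻¹ * SG.gen g i0 * x = v →
      (χ g hg x).k = (n:ℤ) - 1 := by
    intro x hx
    have hc := congrArg (χ g hg) hx
    rw [map_mul, map_mul, map_inv, hχu, hχv, conj_α] at hc
    have hm := congrArg H.m hc
    rw [mk_m, mk_m] at hm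
    have hV := congrArg (padicValRat 2) hm
    rw [val2pow, val2pow] at hV
    omega
  have hlenx_ge : ∀ x : SG.SurfaceGroup g, x⁻¹ * SG.gen g i0 * x = v →
      n - 1 ≤ SG.len g x := by
    intro x hx
    apply le_len
    intro W hW
    have hk := k_bound g hg W
    rw [hW, hklemma x hx] at hk
    omega
  have hlenx0 : SG.len g ((SG.gen g i1) ^ ((n : ℤ) - 1)) = n - 1 := by
    apply le_antisymm
    · have hel2 : SG.evalLetter g ((i1, true) : SG.Letter g) = SG.gen g i1 := by
        simp [SG.evalLetter]
      have he : SG.eval g (List.replicate (n-1) ((i1, true) : SG.Letter g))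
          = (SG.gen g i1) ^ ((n : ℤ) - 1) := by
        rw [eval_replicate, hel2, hzp]
      have hle := len_le g _ he
      simpa using hle
    · exact hlenx_ge _ hx0conj
  refine ⟨⟨_, hx0conj⟩, hlen_v, ?_⟩
  have hmem : (n - 1) ∈ {k | ∃ x : SG.SurfaceGroup g,
      x⁻¹ * SG.gen g i0 * x = v ∧ SG.len g x = k} := ⟨_, hx0conj, hlenx0⟩
  unfold SG.conjLen
  apply le_antisymm (Nat.sInf_le hmem)
  obtain ⟨x, hx, hlx⟩ := Nat.sInf_mem (⟨n - 1, hmem⟩ : Set.Nonempty _)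
  exact hlx ▸ hlenx_ge x hx

end SGP

/-- In the surface group, `u = c₁` and `v = c₂^{1−n} c₁ c₂^{n−1}` are
conjugate, `|v| = 2n − 1`, and the minimal length of a conjugator equals `n − 1`. -/
theorem surface_group_conjugator_example (g : ℕ) (hg : 2 ≤ g) (n : ℕ) (hn : 1 ≤ n) :
    (∃ x : SG.SurfaceGroup g,
        x⁻¹ * SG.gen g ⟨0, by omega⟩ * x =
          (SG.gen g ⟨1, by omega⟩) ^ ((1 : ℤ) - (n : ℤ)) * SG.gen g ⟨0, by omega⟩ *
            (SG.gen g ⟨1, by omega⟩) ^ ((n : ℤ) - 1)) ∧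
    SG.len g ((SG.gen g ⟨1, by omega⟩) ^ ((1 : ℤ) - (n : ℤ)) * SG.gen g ⟨0, by omega⟩ *
        (SG.gen g ⟨1, by omega⟩) ^ ((n : ℤ) - 1)) = 2*n - 1 ∧
    SG.conjLen g (SG.gen g ⟨0, by omega⟩)
      ((SG.gen g ⟨1, by omega⟩) ^ ((1 : ℤ) - (n : ℤ)) * SG.gen g ⟨0, by omega⟩ *
        (SG.gen g ⟨1, by omega⟩) ^ ((n : ℤ) - 1)) = n - 1 := by
  exact SGP.main_aux g hg n hn _ _ rfl rfl
end

section
/- Let F be a free group with a free basis of cardinality at least 2. Then for every integer n ≥ 1, the conjugator length function of F satisfies CL(2n) = CL(2n+1) = n − 1. -/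
namespace FG

/-- Word length of an element of the free group on `α`: the least `n` such that
the element is a product of `n` elements of `S ∪ S⁻¹`, `S = {of a : a ∈ α}`. -/
noncomputable def len (α : Type) (u : FreeGroup α) : ℕ :=
  sInf {n | ∃ L : List (α × Bool), L.length = n ∧
    (L.map fun p => if p.2 then FreeGroup.of p.1 else (FreeGroup.of p.1)⁻¹).prod = u}

/-- The minimum of `|x|` over conjugators `x` with `x⁻¹ux = v`. -/
noncomputable def conjLen (α : Type) (u v : FreeGroup α) : ℕ :=
  sInf {k | ∃ x : FreeGroup α, x⁻¹ * u * x = v ∧ len α x = k}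

/-- The conjugator length function of the free group on `α`. -/
noncomputable def CL (α : Type) (n : ℕ) : ℕ :=
  sInf {N | ∀ u v : FreeGroup α,
    (∃ x : FreeGroup α, x⁻¹ * u * x = v) → len α u + len α v ≤ n →
      conjLen α u v ≤ N}

end FG

namespace CLproof
open FreeGroup List

variable {α : Type}

/-- pair `a` followed by `b` cancels -/
def Cancels (a b : α × Bool) : Prop := a.1 = b.1 ∧ a.2 = !b.2

lemma Cancels.symm {a b : α × Bool} (h : Cancels a b) : Cancels b a :=
  ⟨h.1.symm, by rw [h.2, Bool.not_not]⟩

lemma cancels_iff {a b : α × Bool} : Cancels a b ↔ b = (a.1, !a.2) := by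
  constructor
  · rintro ⟨h1, h2⟩; cases b; cases a; simp_all [Cancels]
  · rintro rfl; exact ⟨rfl, by simp⟩

/-- a word is reduced -/
def R (L : List (α × Bool)) : Prop := List.Chain' (fun a b => ¬ Cancels a b) L

/-- a word is cyclically reduced -/
def CR (L : List (α × Bool)) : Prop := R (L ++ L)

lemma CR.r {L : List (α × Bool)} (h : CR L) : R L := (List.isChain_append.1 h).1

lemma R_reduce_eq [DecidableEq α] {L : List (α × Bool)} (h : R L) : reduce L = L := by
  induction L with
  | nil => rfl
  | cons x t ih =>
    have ht : reduce t = t := ih h.tail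
    rw [reduce.cons, ht]
    cases t with
    | nil => rfl
    | cons y r =>
      have : ¬ (x.1 = y.1 ∧ x.2 = !y.2) := (List.isChain_cons_cons.1 h).1
      simp [this]

lemma reduce_eq_R [DecidableEq α] {L : List (α × Bool)} (h : reduce L = L) : R L := by
  induction L with
  | nil => exact List.isChain_nil
  | cons x t ih =>
    rw [reduce.cons] at h
    rcases ht : reduce t with _ | ⟨y, r⟩
    · rw [ht] at h
      simp only at h
      obtain ⟨-, ht'⟩ := List.cons_eq_cons.1 h
      rw [← ht']; exact List.isChain_singleton x
    · rw [ht] at h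
      by_cases hc : x.1 = y.1 ∧ x.2 = !y.2
      · simp only [hc, if_true] at h
        have h1 := congrArg List.length h
        have h2 : r.length + 1 ≤ t.length := by
          have := (Red.sublist (reduce.red (L := t))).length_le
          rw [ht] at this; simpa using this
        simp at h1; omega
      · simp only [hc, if_false] at h
        have h1 : t = y :: r := by
          have := congrArg List.tail h; simpa using this.symm
        have h2 : R t := ih (by rw [ht, h1])
        rw [h1]
        exact List.isChain_cons_cons.2 ⟨fun hcc => hc ⟨hcc.1, hcc.2⟩, h1 ▸ h2⟩

lemma R_iff [DecidableEq α] {L : List (α × Bool)} : R L ↔ reduce L = L :=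
  ⟨R_reduce_eq, reduce_eq_R⟩

lemma R_toWord [DecidableEq α] (u : FreeGroup α) : R u.toWord :=
  reduce_eq_R (reduce_toWord u)

lemma mk_inj [DecidableEq α] {A B : List (α × Bool)} (hA : R A) (hB : R B)
    (h : mk A = mk B) : A = B := by
  have := reduce.sound h
  rwa [R_reduce_eq hA, R_reduce_eq hB] at this

lemma toWord_mk_R [DecidableEq α] {L : List (α × Bool)} (h : R L) : (mk L).toWord = L := by
  rw [toWord_mk, R_reduce_eq h]

lemma norm_mk_R [DecidableEq α] {L : List (α × Bool)} (h : R L) : norm (mk L) = L.length := by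
  unfold FreeGroup.norm; rw [toWord_mk_R h]


lemma R_infix {L M : List (α × Bool)} (h : R M) (hinf : L <:+: M) : R L := by
  obtain ⟨p, s, rfl⟩ := hinf
  exact ((List.isChain_append.1 ((List.isChain_append.1 (by
    rwa [List.append_assoc] at h)).2.1)).1)

lemma R_invRev {L : List (α × Bool)} (h : R L) : R (invRev L) := by
  unfold FreeGroup.invRev
  rw [R, List.Chain', List.isChain_reverse, List.isChain_map]
  refine h.imp ?_
  rintro a b hab hc
  exact hab ⟨hc.1.symm, by have := hc.2; revert this; cases a.2 <;> cases b.2 <;> simp⟩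

lemma R_three {L : List (α × Bool)} (h : CR L) : R (L ++ L ++ L) := by
  have h1 := List.isChain_append.1 h
  refine List.isChain_append.2 ⟨h, h1.1, ?_⟩
  intro x hx y hy
  rcases eq_or_ne L [] with rfl | hL
  · simp at hx
  · refine h1.2.2 x ?_ y hy
    rwa [List.getLast?_append_of_ne_nil _ hL] at hx

lemma CR_rotate {L : List (α × Bool)} (h : CR L) (k : ℕ) (hk : k ≤ L.length) :
    CR (L.rotate k) := by
  rw [List.rotate_eq_drop_append_take hk]
  have e1 : (L.drop k ++ L.take k) ++ (L.drop k ++ L.take k) =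
      L.drop k ++ (L.take k ++ L.drop k) ++ L.take k := by
    simp only [List.append_assoc]
  rw [CR, e1, List.take_append_drop]
  refine R_infix (R_three h) ⟨L.take k, L.drop k, ?_⟩
  calc L.take k ++ (L.drop k ++ L ++ L.take k) ++ L.drop k
      = (L.take k ++ L.drop k) ++ L ++ (L.take k ++ L.drop k) := by
        simp only [List.append_assoc]
    _ = L ++ L ++ L := by rw [List.take_append_drop]

lemma CR_rotate' {L : List (α × Bool)} (h : CR L) (k : ℕ) : CR (L.rotate k) := by
  rcases eq_or_ne L [] with rfl | hL
  · simpa using h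
  · rw [← List.rotate_mod]
    exact CR_rotate h _ (Nat.mod_lt _ (List.length_pos_iff.2 hL)).le

lemma mk_nil_eq_one [DecidableEq α] : mk ([] : List (α × Bool)) = 1 := by
  have := mk_toWord (x := (1 : FreeGroup α))
  rwa [toWord_one] at this

lemma inv_singleton [DecidableEq α] (s : α × Bool) : (mk [s])⁻¹ = mk [(s.1, !s.2)] := by
  rw [inv_mk]; rfl


/-- formal inverse of a letter -/
def bar (s : α × Bool) : α × Bool := (s.1, !s.2)

lemma bar_bar (s : α × Bool) : bar (bar s) = s := by simp [bar]

lemma cancels_iff' {a b : α × Bool} : Cancels a b ↔ b = bar a := cancels_iff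

lemma getLast?_invRev (L : List (α × Bool)) :
    (invRev L).getLast? = L.head?.map bar := by
  simp only [invRev, List.getLast?_reverse, List.head?_map]
  rfl

lemma head?_invRev (L : List (α × Bool)) :
    (invRev L).head? = L.getLast?.map bar := by
  simp only [invRev, List.head?_reverse, List.getLast?_map]
  rfl

lemma mk_cons (s : α × Bool) (L : List (α × Bool)) : mk (s :: L) = mk [s] * mk L := by
  rw [mul_mk]; rfl

lemma rotate_concat (M : List (α × Bool)) (t : α × Bool) :
    (M ++ [t]).rotate M.length = t :: M := by
  rw [List.rotate_eq_drop_append_take (by simp), List.drop_left, List.take_left]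
  rfl

/-- The cyclic shift theorem: a cyclically reduced word conjugate to another
cyclically reduced word is a rotation of it. -/
theorem rotate_conj [DecidableEq α] : ∀ (X U V : List (α × Bool)), R X → CR U → U ≠ [] →
    CR V → (mk X)⁻¹ * mk U * mk X = mk V → ∃ k, V = U.rotate k := by
  intro X
  induction X with
  | nil =>
    intro U V _ hU _ hV h
    rw [mk_nil_eq_one] at h
    simp only [inv_one, one_mul, mul_one] at h
    exact ⟨0, by rw [List.rotate_zero]; exact (mk_inj hU.r hV.r h).symm⟩
  | cons s X' ih =>
    intro U V hX hU hUne hV h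
    by_cases hfw : U.head? = some s
    · -- forward shift
      cases U with
      | nil => exact absurd rfl hUne
      | cons u0 U' =>
        have hu0 : s = u0 := (by simpa using hfw : u0 = s).symm
        subst hu0
        have hrot : (s :: U').rotate 1 = U' ++ [s] := by
          rw [List.rotate_cons_succ, List.rotate_zero]
        have hCR' : CR (U' ++ [s]) := hrot ▸ CR_rotate' hU 1
        have heq : (mk X')⁻¹ * mk (U' ++ [s]) * mk X' = mk V := by
          rw [← h, mk_cons s U', mk_cons s X', ← mul_mk]
          group
        obtain ⟨k, hk⟩ := ih _ _ hX.tail hCR' (by simp) hV heq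
        exact ⟨1 + k, by rw [← List.rotate_rotate, hrot, hk]⟩
    · by_cases hbw : U.getLast? = some (bar s)
      · -- backward shift
        obtain ⟨M, hdl⟩ : ∃ M, M ++ [bar s] = U := by
          obtain ⟨h1, h2⟩ := List.mem_getLast?_eq_getLast hbw
          exact ⟨U.dropLast, by rw [h2]; exact List.dropLast_append_getLast h1⟩
        subst hdl
        have hrot := rotate_concat M (bar s)
        have hCR' : CR (bar s :: M) := hrot ▸ CR_rotate' hU M.length
        have heq : (mk X')⁻¹ * mk (bar s :: M) * mk X' = mk V := by
          rw [← h, mk_cons s X', mk_cons (bar s) M, ← mul_mk]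
          have hbs : mk [bar s] = (mk [s])⁻¹ := (inv_singleton s).symm
          rw [hbs]
          group
        obtain ⟨k, hk⟩ := ih _ _ hX.tail hCR' (by simp) hV heq
        exact ⟨M.length + k, by rw [← List.rotate_rotate, hrot, hk]⟩
      · -- no cancellation: contradiction with V cyclically reduced
        exfalso
        have hXne : (s :: X') ≠ [] := List.cons_ne_nil _ _
        have hiRne : invRev (s :: X') ≠ [] := by simp [invRev]
        have hV' : mk V = mk ((invRev (s :: X') ++ U) ++ (s :: X')) := by
          rw [← h, inv_mk, mul_mk, mul_mk]
        have hRW : R ((invRev (s :: X') ++ U) ++ (s :: X')) := by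
          refine List.isChain_append.2 ⟨List.isChain_append.2 ⟨R_invRev hX, hU.r, ?_⟩, hX, ?_⟩
          · intro x hx y hy hc
            rw [getLast?_invRev] at hx
            simp only [List.head?_cons, Option.map_some, Option.mem_def,
              Option.some.injEq] at hx
            rw [cancels_iff'] at hc
            apply hfw
            rw [Option.mem_def] at hy
            rw [hy, hc, ← hx, bar_bar]
          · intro x hx y hy hc
            simp only [List.head?_cons, Option.mem_def, Option.some.injEq] at hy
            rw [cancels_iff'] at hc
            apply hbw
            rw [Option.mem_def, List.getLast?_append_of_ne_nil _ hUne] at hx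
            rw [hx, hy, hc, bar_bar]
        have hVeq : V = (invRev (s :: X') ++ U) ++ (s :: X') := mk_inj hV.r hRW hV'
        set e := (s :: X').getLast hXne with he
        have hle : (s :: X').getLast? = some e := List.getLast?_eq_getLast hXne
        have hlastV : V.getLast? = some e := by
          rw [hVeq, List.getLast?_append_of_ne_nil _ hXne, hle]
        have hheadV : V.head? = some (bar e) := by
          rw [hVeq, List.head?_append_of_ne_nil _ (by simp [hiRne]),
            List.head?_append_of_ne_nil _ hiRne, head?_invRev, hle]
          rfl
        exact (List.isChain_append.1 hV).2.2 e (by rw [Option.mem_def, hlastV]) (bar e)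
          (by rw [Option.mem_def, hheadV]) (cancels_iff'.2 rfl)

lemma norm_def [DecidableEq α] (u : FreeGroup α) : norm u = u.toWord.length := rfl

lemma toWord_ne_nil [DecidableEq α] {u : FreeGroup α} (hu : u ≠ 1) : u.toWord ≠ [] :=
  fun hh => hu (by rw [← mk_toWord (x := u), hh, mk_nil_eq_one])

/-- decomposition of a non-cyclically-reduced element -/
lemma not_CR_decomp [DecidableEq α] {u : FreeGroup α} (hCR : ¬ CR u.toWord) :
    ∃ (s : α × Bool) (W : List (α × Bool)), R W ∧ W ≠ [] ∧
      u = mk [s] * mk W * (mk [s])⁻¹ ∧ norm u = W.length + 2 := by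
  have hRU : R u.toWord := R_toWord u
  have hj : ¬ (∀ x ∈ u.toWord.getLast?, ∀ y ∈ u.toWord.head?, ¬ Cancels x y) :=
    fun hj => hCR (List.isChain_append.2 ⟨hRU, hRU, hj⟩)
  push_neg at hj
  obtain ⟨x, hx, y, hy, hc⟩ := hj
  rcases hU : u.toWord with - | ⟨s, M⟩
  · rw [hU] at hx; simp at hx
  · rw [hU] at hx hy hRU
    have hys : s = y := by simpa using hy
    subst hys
    rcases List.eq_nil_or_concat M with rfl | ⟨W, t, rfl⟩
    · have hxs : s = x := by simpa using hx
      subst hxs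
      exact absurd hc.2 (by simp)
    · rw [List.concat_eq_append] at hx hU hRU
      have hxt : t = x := by
        have hgl : (s :: (W ++ [t])).getLast? = some t := by
          rw [show s :: (W ++ [t]) = (s :: W) ++ [t] from rfl, List.getLast?_concat]
        rw [Option.mem_def, hgl] at hx
        simpa using hx
      subst hxt
      have hts : t = bar s := by rw [cancels_iff'.1 hc, bar_bar]
      have hWne : W ≠ [] := by
        rintro rfl
        exact (List.isChain_cons_cons.1 hRU).1 hc.symm
      refine ⟨s, W, R_infix hRU ⟨[s], [t], by simp⟩, hWne, ?_, ?_⟩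
      · rw [← mk_toWord (x := u), hU, hts, inv_singleton, mul_mk, mul_mk]
        rfl
      · rw [norm_def, hU]; simp

theorem exists_short_conj [DecidableEq α] :
    ∀ N : ℕ, ∀ u v x : FreeGroup α, u ≠ 1 → norm u + norm v ≤ N →
      x⁻¹ * u * x = v →
      ∃ y : FreeGroup α, y⁻¹ * u * y = v ∧ 2 * norm y + 2 ≤ norm u + norm v := by
  intro N
  induction N using Nat.strong_induction_on with
  | _ N IH =>
  intro u v x hu hN h
  by_cases hCRu : CR u.toWord
  · by_cases hCRv : CR v.toWord
    · -- both cyclically reduced: rotation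
      have hUne : u.toWord ≠ [] := toWord_ne_nil hu
      have h' : (mk x.toWord)⁻¹ * mk u.toWord * mk x.toWord = mk v.toWord := by
        simp only [mk_toWord]; exact h
      obtain ⟨k, hk⟩ := rotate_conj x.toWord u.toWord v.toWord (R_toWord x) hCRu hUne hCRv h'
      have hm0 : 0 < u.toWord.length := List.length_pos_iff.2 hUne
      have hkm : k % u.toWord.length < u.toWord.length := Nat.mod_lt _ hm0
      set k' := k % u.toWord.length with hk'def
      have hrotk : v.toWord = u.toWord.rotate k' := by rw [hk, hk'def, List.rotate_mod]
      obtain ⟨T, D, hTD, hTt, hDd⟩ : ∃ T D, u.toWord = T ++ D ∧ T = u.toWord.take k' ∧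
          D = u.toWord.drop k' :=
        ⟨_, _, (List.take_append_drop k' u.toWord).symm, rfl, rfl⟩
      have e1 : u = mk T * mk D := by rw [mul_mk, ← hTD, mk_toWord]
      have e2 : v = mk D * mk T := by
        rw [mul_mk, hTt, hDd, ← List.rotate_eq_drop_append_take hkm.le, ← hrotk, mk_toWord]
      refine ⟨mk T, ?_, ?_⟩
      · rw [e1, e2]; group
      · have h1 : norm (mk T) = k' := by
          rw [norm_mk_R (R_infix hCRu.r ⟨[], D, by simp [← hTD]⟩), hTt, List.length_take]
          omega
        have h2 : norm v = u.toWord.length := by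
          rw [norm_def, hrotk, List.length_rotate]
        rw [h1, h2, norm_def]
        omega
    · -- v not cyclically reduced
      obtain ⟨s, W, hRW, hWne, hveq, hnv⟩ := not_CR_decomp hCRv
      have hnw : norm (mk W) = W.length := norm_mk_R hRW
      have hconj : (x * mk [s])⁻¹ * u * (x * mk [s]) = mk W := by
        have : mk W = (mk [s])⁻¹ * v * mk [s] := by rw [hveq]; group
        rw [this, ← h]; group
      obtain ⟨y', hy'c, hy'n⟩ := IH (norm u + norm (mk W))
        (by omega) u (mk W) (x * mk [s]) hu le_rfl hconj
      refine ⟨y' * (mk [s])⁻¹, ?_, ?_⟩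
      · rw [hveq, ← hy'c]; group
      · have : norm (y' * (mk [s])⁻¹) ≤ norm y' + 1 := by
          calc norm (y' * (mk [s])⁻¹) ≤ norm y' + norm (mk [s])⁻¹ := norm_mul_le _ _
            _ = norm y' + 1 := by rw [norm_inv_eq, norm_mk_R (List.isChain_singleton s)]; rfl
        omega
  · -- u not cyclically reduced
    obtain ⟨s, W, hRW, hWne, hueq, hnu⟩ := not_CR_decomp hCRu
    have hnw : norm (mk W) = W.length := norm_mk_R hRW
    have hwne : mk W ≠ 1 := by
      intro hh
      rw [hh, FreeGroup.norm_one] at hnw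
      exact hWne (List.length_eq_zero_iff.1 hnw.symm)
    have hconj : ((mk [s])⁻¹ * x)⁻¹ * mk W * ((mk [s])⁻¹ * x) = v := by
      have : mk W = (mk [s])⁻¹ * u * mk [s] := by rw [hueq]; group
      rw [this, ← h]; group
    obtain ⟨y', hy'c, hy'n⟩ := IH (norm (mk W) + norm v)
      (by omega) (mk W) v ((mk [s])⁻¹ * x) hwne le_rfl hconj
    refine ⟨mk [s] * y', ?_, ?_⟩
    · rw [hueq, ← hy'c]; group
    · have : norm (mk [s] * y') ≤ norm y' + 1 := by
        calc norm (mk [s] * y') ≤ norm (mk [s]) + norm y' := norm_mul_le _ _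
          _ = norm y' + 1 := by rw [norm_mk_R (List.isChain_singleton s)]; simp [Nat.add_comm]
      omega

lemma prod_eq_mk : ∀ L : List (α × Bool),
    (L.map fun p => if p.2 then FreeGroup.of p.1 else (FreeGroup.of p.1)⁻¹).prod = mk L := by
  intro L
  induction L with
  | nil =>
    simp only [List.map_nil, List.prod_nil]
    exact (FreeGroup.one_eq_mk).symm ▸ rfl
  | cons p L ih =>
    rw [List.map_cons, List.prod_cons, ih, mk_cons p L]
    congr 1
    rcases p with ⟨a, _ | _⟩
    · simp only [if_neg Bool.false_ne_true]
      rw [show FreeGroup.of a = mk [(a, true)] from rfl, inv_mk]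
      rfl
    · simp only [if_pos rfl]
      rfl

lemma len_eq_norm [DecidableEq α] (u : FreeGroup α) : FG.len α u = norm u := by
  have hmem : norm u ∈ {n | ∃ L : List (α × Bool), L.length = n ∧
      (L.map fun p => if p.2 then FreeGroup.of p.1 else (FreeGroup.of p.1)⁻¹).prod = u} :=
    ⟨u.toWord, rfl, by rw [prod_eq_mk, mk_toWord]⟩
  refine le_antisymm (Nat.sInf_le hmem) ?_
  obtain ⟨L, hL, hprod⟩ := Nat.sInf_mem (⟨_, hmem⟩ : Set.Nonempty _)
  rw [prod_eq_mk] at hprod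
  calc norm u = norm (mk L) := by rw [hprod]
    _ ≤ L.length := norm_mk_le
    _ = FG.len α u := hL

/-- upper bound half -/
lemma conjLen_le [DecidableEq α] {n : ℕ} (hn : 1 ≤ n) (u v : FreeGroup α)
    (hconj : ∃ x : FreeGroup α, x⁻¹ * u * x = v) (hsum : FG.len α u + FG.len α v ≤ 2*n+1) :
    FG.conjLen α u v ≤ n - 1 := by
  obtain ⟨x, hx⟩ := hconj
  by_cases hu : u = 1
  · have hv : v = 1 := by rw [← hx, hu]; group
    have : (0 : ℕ) ∈ {k | ∃ x : FreeGroup α, x⁻¹ * u * x = v ∧ FG.len α x = k} :=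
      ⟨1, by rw [hu, hv]; group, by rw [len_eq_norm, FreeGroup.norm_one]⟩
    exact le_trans (Nat.sInf_le this) (Nat.zero_le _)
  · rw [len_eq_norm, len_eq_norm] at hsum
    obtain ⟨y, hyc, hyn⟩ := exists_short_conj (norm u + norm v) u v x hu le_rfl hx
    have hyb : norm y ≤ n - 1 := by omega
    have : norm y ∈ {k | ∃ x : FreeGroup α, x⁻¹ * u * x = v ∧ FG.len α x = k} :=
      ⟨y, hyc, len_eq_norm y⟩
    exact le_trans (Nat.sInf_le this) hyb

/-- the witness pair -/
lemma witness [DecidableEq α] {a b : α} (hab : a ≠ b) (n : ℕ) (hn : 1 ≤ n) :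
    ∃ u v : FreeGroup α, (∃ x : FreeGroup α, x⁻¹ * u * x = v) ∧
      FG.len α u + FG.len α v = 2*n ∧ n - 1 ≤ FG.conjLen α u v := by
  set g : FreeGroup α := (FreeGroup.of b)^(n-1) with hg
  set u : FreeGroup α := FreeGroup.of a with huD
  set v : FreeGroup α := g * u * g⁻¹ with hvD
  have hconj : (g⁻¹)⁻¹ * u * g⁻¹ = v := by rw [hvD]; group
  have hng : norm g = n - 1 := norm_of_pow b (n-1)
  -- norm of v
  have hWv : R (List.replicate (n-1) (b, true) ++ ((a, true) ::
      List.replicate (n-1) (b, false))) := by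
    refine List.isChain_append.2 ⟨List.isChain_replicate_of_rel _ (by simp [Cancels]), ?_, ?_⟩
    · refine List.isChain_cons.2 ⟨?_, List.isChain_replicate_of_rel _ (by simp [Cancels])⟩
      intro h hh hc
      have : h = (b, false) := List.eq_of_mem_replicate (List.mem_of_mem_head? hh)
      rw [this] at hc
      exact hab (by simpa [Cancels] using hc.1)
    · intro x hx y hy hc
      have hxx : x = (b, true) := List.eq_of_mem_replicate (List.mem_of_mem_getLast? hx)
      have hyy : (a, true) = y := by simpa using hy
      rw [hxx, ← hyy] at hc
      exact absurd hc.2 (by simp)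
  have e1 : mk (List.replicate (n-1) (b, true)) = (FreeGroup.of b)^(n-1) := by
    rw [← toWord_of_pow b (n-1), mk_toWord]
  have e2 : mk (List.replicate (n-1) (b, false)) = ((FreeGroup.of b)^(n-1))⁻¹ := by
    rw [← e1, inv_mk]
    congr 1
    simp [invRev]
  have hmkv : mk (List.replicate (n-1) (b, true) ++ ((a, true) ::
      List.replicate (n-1) (b, false))) = v := by
    rw [← mul_mk, mk_cons, e1, e2, hvD, huD, hg, mul_assoc]
    rfl
  have hnv : norm v = 2*n - 1 := by
    rw [← hmkv, norm_mk_R hWv]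
    simp only [List.length_append, List.length_replicate, List.length_cons]
    omega
  have hnu : norm u = 1 := norm_of a
  refine ⟨u, v, ⟨g⁻¹, hconj⟩, ?_, ?_⟩
  · rw [len_eq_norm, len_eq_norm, hnu, hnv]; omega
  · -- every conjugator is long
    have hSne : {k | ∃ x : FreeGroup α, x⁻¹ * u * x = v ∧ FG.len α x = k}.Nonempty :=
      ⟨FG.len α g⁻¹, g⁻¹, hconj, rfl⟩
    obtain ⟨x, hxc, hxl⟩ := Nat.sInf_mem hSne
    rw [show FG.conjLen α u v = sInf {k | ∃ x : FreeGroup α, x⁻¹ * u * x = v ∧ FG.len α x = k}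
      from rfl, ← hxl, len_eq_norm]
    have : norm v ≤ norm x + norm u + norm x := by
      calc norm v = norm (x⁻¹ * u * x) := by rw [hxc]
        _ ≤ norm (x⁻¹ * u) + norm x := norm_mul_le _ _
        _ ≤ norm x⁻¹ + norm u + norm x := by
            have := norm_mul_le x⁻¹ u; omega
        _ = norm x + norm u + norm x := by rw [norm_inv_eq]
    omega

end CLproof

/-- For a free group with free basis of cardinality at least 2,
for every `n ≥ 1`, `CL(2n) = CL(2n+1) = n − 1`. -/
theorem free_group_conjugator_length (α : Type) [Nontrivial α] (n : ℕ) (hn : 1 ≤ n) :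
    FG.CL α (2*n) = FG.CL α (2*n+1) ∧ FG.CL α (2*n) = n - 1 := by
  classical
  obtain ⟨a, b, hab⟩ := exists_pair_ne α
  obtain ⟨u, v, hconj, hsum, hlow⟩ := CLproof.witness hab n hn
  have key : ∀ m : ℕ, 2*n ≤ m → m ≤ 2*n+1 → FG.CL α m = n - 1 := by
    intro m hm1 hm2
    have hmem : (n-1) ∈ {N | ∀ u v : FreeGroup α,
        (∃ x : FreeGroup α, x⁻¹ * u * x = v) → FG.len α u + FG.len α v ≤ m →
        FG.conjLen α u v ≤ N} := by
      intro u v hc hs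
      exact CLproof.conjLen_le hn u v hc (le_trans hs hm2)
    refine le_antisymm (Nat.sInf_le hmem) ?_
    have := Nat.sInf_mem (⟨_, hmem⟩ : Set.Nonempty _)
    exact le_trans hlow (this u v hconj (by omega))
  rw [key (2*n) le_rfl (by omega), key (2*n+1) (by omega) le_rfl]
  exact ⟨rfl, rfl⟩
end
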